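/- Consider an L-layer GIN with parameter ζ ≥ 0 as below, on a graph with 0/1 adjacency matrix A ∈ ℝ^{n×n} of maximum degree Δ, with every weight matrix satisfying ‖W^{(ℓ)}‖_∞ ≥ 1. Let X, X' ∈ ℝ^{n×K} with ‖X_v − X'_v‖_∞ ≤ ε for every node v, and suppose that at every intermediate layer ℓ ∈ {0, …, L−1} the hidden-state rows of the two runs satisfy ‖H^{(ℓ)}_v − H'^{(ℓ)}_v‖_∞ ≤ B for all v. Then for every node u: ‖H^{(L)}_u − H'^{(L)}_u‖_∞ ≤ (∏_{ℓ=1}^{L} ‖W^{(ℓ)}‖_∞) · (B · Δ · Σ_{l=1}^{L} (1+ζ)^l + (1+ζ)^L · ε). -/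

import Mathlib

open scoped BigOperators

/-- An `L`-layer GIN with parameter `ζ`: `H⁽⁰⁾ = X` and
`H⁽ˡ⁺¹⁾ = φ⁽ˡ⁺¹⁾((A + (1+ζ)·I) H⁽ˡ⁾ W⁽ˡ⁺¹⁾)`, the activation applied entrywise. -/
noncomputable def gin {n : ℕ} (d : ℕ → ℕ) (ζ : ℝ) (φ : ℕ → ℝ → ℝ)
    (A : Matrix (Fin n) (Fin n) ℝ)
    (W : (ℓ : ℕ) → Matrix (Fin (d ℓ)) (Fin (d (ℓ + 1))) ℝ)
    (X : Matrix (Fin n) (Fin (d 0)) ℝ) : (ℓ : ℕ) → Matrix (Fin n) (Fin (d ℓ)) ℝ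
  | 0 => X
  | (ℓ + 1) =>
      ((A + (1 + ζ) • (1 : Matrix (Fin n) (Fin n) ℝ)) * gin d ζ φ A W X ℓ * W ℓ).map
        (φ (ℓ + 1))

/-- The operator norm of the map `h ↦ hW` on row vectors with respect to the `ℓ∞`
norm: the maximum absolute column sum of `W`. -/
noncomputable def opNormInf {m e : ℕ} (W : Matrix (Fin m) (Fin e) ℝ) : ℝ :=
  ⨆ j : Fin e, ∑ i : Fin m, |W i j|




lemma row_norm_le {m : ℕ} (f : Fin m → ℝ) {r : ℝ} (hr : 0 ≤ r)
    (h : ∀ j, |f j| ≤ r) : ‖f‖ ≤ r := by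
  rw [pi_norm_le_iff_of_nonneg hr]
  simpa [Real.norm_eq_abs] using h

lemma abs_row_le {m : ℕ} (f : Fin m → ℝ) (j : Fin m) : |f j| ≤ ‖f‖ := by
  simpa [Real.norm_eq_abs] using norm_le_pi_norm f j

lemma opNormInf_nonneg {m e : ℕ} (W : Matrix (Fin m) (Fin e) ℝ) : 0 ≤ opNormInf W :=
  Real.iSup_nonneg fun j => Finset.sum_nonneg fun i _ => abs_nonneg _

lemma mul_row_norm_le {n m e : ℕ} (E : Matrix (Fin n) (Fin m) ℝ)
    (W : Matrix (Fin m) (Fin e) ℝ) (u : Fin n) :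
    ‖(E * W) u‖ ≤ opNormInf W * ‖E u‖ := by
  apply row_norm_le _ (mul_nonneg (opNormInf_nonneg W) (norm_nonneg _))
  intro j
  rw [show (E * W) u j = ∑ i, E u i * W i j from Matrix.mul_apply]
  calc |∑ i, E u i * W i j| ≤ ∑ i, |E u i * W i j| := Finset.abs_sum_le_sum_abs _ _
    _ ≤ ∑ i, ‖E u‖ * |W i j| := by
        refine Finset.sum_le_sum fun i _ => ?_
        rw [abs_mul]
        exact mul_le_mul_of_nonneg_right (abs_row_le (E u) i) (abs_nonneg _)
    _ = (∑ i, |W i j|) * ‖E u‖ := by rw [← Finset.mul_sum]; ring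
    _ ≤ opNormInf W * ‖E u‖ := by
        have hle : ∑ i, |W i j| ≤ opNormInf W :=
          le_ciSup (f := fun j => ∑ i, |W i j|)
            (Set.Finite.bddAbove (Set.finite_range _)) j
        exact mul_le_mul_of_nonneg_right hle (norm_nonneg _)

lemma map_row_norm_le {n m : ℕ} (M M' : Matrix (Fin n) (Fin m) ℝ)
    (φ : ℝ → ℝ) (hφ : LipschitzWith 1 φ) (u : Fin n) :
    ‖(M.map φ) u - (M'.map φ) u‖ ≤ ‖M u - M' u‖ := by
  apply row_norm_le _ (norm_nonneg _)
  intro j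
  have h := hφ.dist_le_mul (M u j) (M' u j)
  simp only [Real.dist_eq, NNReal.coe_one, one_mul] at h
  calc |((M.map φ) u - (M'.map φ) u) j| = |φ (M u j) - φ (M' u j)| := rfl
    _ ≤ |M u j - M' u j| := h
    _ ≤ ‖M u - M' u‖ := by simpa using abs_row_le (M u - M' u) j

lemma agg_row_norm_le {n : ℕ} (c B Δ : ℝ) (hc : 0 ≤ c) (hB : 0 ≤ B) (hΔ0 : 0 ≤ Δ)
    (A : Matrix (Fin n) (Fin n) ℝ) (hA : ∀ i j, 0 ≤ A i j)
    (hΔ : ∀ u, ∑ v, A u v ≤ Δ)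
    {m : ℕ} (E : Matrix (Fin n) (Fin m) ℝ) (u : Fin n)
    (hE : ∀ v, ‖E v‖ ≤ B) :
    ‖((A + c • (1 : Matrix (Fin n) (Fin n) ℝ)) * E) u‖ ≤ c * ‖E u‖ + Δ * B := by
  apply row_norm_le _ (add_nonneg (mul_nonneg hc (norm_nonneg _)) (mul_nonneg hΔ0 hB))
  intro j
  have hentry : ((A + c • (1 : Matrix (Fin n) (Fin n) ℝ)) * E) u j
      = c * E u j + ∑ v, A u v * E v j := by
    rw [show ((A + c • (1 : Matrix (Fin n) (Fin n) ℝ)) * E) u j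
        = ∑ v, (A u v + c * (if u = v then (1:ℝ) else 0)) * E v j from by
      rw [Matrix.mul_apply]; simp [Matrix.one_apply]]
    simp [add_mul, Finset.sum_add_distrib, mul_ite, ite_mul, mul_assoc]
    ring
  rw [hentry]
  calc |c * E u j + ∑ v, A u v * E v j|
      ≤ c * |E u j| + ∑ v, A u v * |E v j| := by
        refine (abs_add_le _ _).trans ?_
        gcongr
        · rw [abs_mul, abs_of_nonneg hc]
        · refine (Finset.abs_sum_le_sum_abs _ _).trans ?_
          refine Finset.sum_le_sum fun v _ => ?_
          rw [abs_mul, abs_of_nonneg (hA u v)]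
    _ ≤ c * ‖E u‖ + ∑ v, A u v * B := by
        gcongr with v
        · exact abs_row_le (E u) j
        · exact hA u v
        · exact (abs_row_le (E v) j).trans (hE v)
    _ ≤ c * ‖E u‖ + Δ * B := by
        rw [← Finset.sum_mul]
        gcongr
        exact hΔ u

lemma sum_pow_succ_id (ζ : ℝ) (ℓ : ℕ) :
    (1+ζ) * ∑ l ∈ Finset.Icc 1 ℓ, (1+ζ)^l + (1+ζ) = ∑ l ∈ Finset.Icc 1 (ℓ+1), (1+ζ)^l := by
  induction ℓ with
  | zero => simp
  | succ k ih =>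
    rw [Finset.sum_Icc_succ_top (by omega : 1 ≤ k + 1 + 1),
      Finset.sum_Icc_succ_top (by omega : 1 ≤ k + 1)]
    rw [Finset.sum_Icc_succ_top (by omega : 1 ≤ k + 1)] at ih
    linear_combination ih

/-- General-`ζ` intermediate inequality from the proof of Theorem 3: on a graph with
0/1 adjacency matrix of maximum degree `Δ`, with weight matrices of `ℓ∞` operator norm
at least `1`, if every row of the feature perturbation has `ℓ∞` norm at most `ε` and at
every intermediate layer the hidden-state rows of the two runs differ by at most `B` in
`ℓ∞` norm, then every output row differs by at most
`(∏ ℓ, ‖W⁽ˡ⁾‖_∞) · (B·Δ·∑_{l=1}^{L}(1+ζ)^l + (1+ζ)^L·ε)` in `ℓ∞` norm. -/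
theorem gin_feature_attack_bound_general_zeta
    {n : ℕ} (L : ℕ) (d : ℕ → ℕ) (ζ : ℝ) (hζ : 0 ≤ ζ) (φ : ℕ → ℝ → ℝ)
    (A : Matrix (Fin n) (Fin n) ℝ) (hA : ∀ i j, A i j = 0 ∨ A i j = 1)
    (Δ : ℕ) (hΔ : ∀ u : Fin n, ∑ v : Fin n, A u v ≤ (Δ : ℝ))
    (W : (ℓ : ℕ) → Matrix (Fin (d ℓ)) (Fin (d (ℓ + 1))) ℝ)
    (hφ : ∀ ℓ, LipschitzWith 1 (φ ℓ))
    (hW : ∀ ℓ < L, 1 ≤ opNormInf (W ℓ))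
    (X X' : Matrix (Fin n) (Fin (d 0)) ℝ) (ε B : ℝ)
    (hX : ∀ v : Fin n, ‖X v - X' v‖ ≤ ε)
    (hB : ∀ ℓ < L, ∀ v : Fin n, ‖gin d ζ φ A W X ℓ v - gin d ζ φ A W X' ℓ v‖ ≤ B) :
    ∀ u : Fin n,
      ‖gin d ζ φ A W X L u - gin d ζ φ A W X' L u‖ ≤
        (∏ ℓ ∈ Finset.range L, opNormInf (W ℓ)) *
          (B * (Δ : ℝ) * (∑ l ∈ Finset.Icc 1 L, (1 + ζ) ^ l) + (1 + ζ) ^ L * ε) := by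
  intro u
  have hε : 0 ≤ ε := le_trans (norm_nonneg _) (hX u)
  have hΔ0 : (0:ℝ) ≤ (Δ:ℝ) := Nat.cast_nonneg Δ
  have hA0 : ∀ i j, 0 ≤ A i j := fun i j => by rcases hA i j with h | h <;> simp [h]
  have key : ∀ ℓ ≤ L, ∀ v : Fin n,
      ‖gin d ζ φ A W X ℓ v - gin d ζ φ A W X' ℓ v‖ ≤
        (∏ k ∈ Finset.range ℓ, opNormInf (W k)) *
          (B * (Δ : ℝ) * (∑ l ∈ Finset.Icc 1 ℓ, (1 + ζ) ^ l) + (1 + ζ) ^ ℓ * ε) := by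
    intro ℓ
    induction ℓ with
    | zero => intro _ v; simpa [gin] using hX v
    | succ k ih =>
      intro hkL v
      have hk : k < L := hkL
      have ihk := ih (le_of_lt hk)
      have hB0 : 0 ≤ B := le_trans (norm_nonneg _) (hB k hk u)
      have hw : 1 ≤ opNormInf (W k) := hW k hk
      have hP : 1 ≤ ∏ j ∈ Finset.range k, opNormInf (W j) := by
        calc (1:ℝ) = ∏ j ∈ Finset.range k, 1 := by simp
          _ ≤ ∏ j ∈ Finset.range k, opNormInf (W j) :=
            Finset.prod_le_prod (fun _ _ => zero_le_one) (fun j hj => hW j (lt_of_lt_of_le (Finset.mem_range.mp hj) (le_of_lt hk)))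
      set P := ∏ j ∈ Finset.range k, opNormInf (W j) with hPdef
      set S := ∑ l ∈ Finset.Icc 1 k, (1 + ζ) ^ l with hSdef
      set M := (A + (1 + ζ) • (1 : Matrix (Fin n) (Fin n) ℝ)) with hM
      have step1 : ‖gin d ζ φ A W X (k+1) v - gin d ζ φ A W X' (k+1) v‖ ≤
          ‖(M * gin d ζ φ A W X k * W k) v - (M * gin d ζ φ A W X' k * W k) v‖ := by
        rw [show gin d ζ φ A W X (k+1)
            = ((M * gin d ζ φ A W X k * W k).map (φ (k+1))) from rfl,
          show gin d ζ φ A W X' (k+1)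
            = ((M * gin d ζ φ A W X' k * W k).map (φ (k+1))) from rfl]
        exact map_row_norm_le _ _ _ (hφ (k+1)) v
      have hfact : M * gin d ζ φ A W X k * W k - M * gin d ζ φ A W X' k * W k
          = (M * (gin d ζ φ A W X k - gin d ζ φ A W X' k)) * W k := by
        rw [Matrix.mul_sub, Matrix.sub_mul]
      have step2 : ‖(M * gin d ζ φ A W X k * W k) v - (M * gin d ζ φ A W X' k * W k) v‖
          ≤ opNormInf (W k) * ‖(M * (gin d ζ φ A W X k - gin d ζ φ A W X' k)) v‖ := by
        have : (M * gin d ζ φ A W X k * W k) v - (M * gin d ζ φ A W X' k * W k) v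
            = ((M * (gin d ζ φ A W X k - gin d ζ φ A W X' k)) * W k) v := by
          rw [← hfact]; rfl
        rw [this]
        exact mul_row_norm_le _ _ v
      have step3 : ‖(M * (gin d ζ φ A W X k - gin d ζ φ A W X' k)) v‖
          ≤ (1 + ζ) * ‖(gin d ζ φ A W X k - gin d ζ φ A W X' k) v‖ + (Δ:ℝ) * B := by
        refine agg_row_norm_le (1+ζ) B (Δ:ℝ) (by linarith) hB0 hΔ0 A hA0 hΔ _ v ?_
        intro w
        exact hB k hk w
      have hrow : ‖(gin d ζ φ A W X k - gin d ζ φ A W X' k) v‖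
          ≤ P * (B * (Δ:ℝ) * S + (1 + ζ) ^ k * ε) := by
        exact ihk v
      have hnn : 0 ≤ ‖(gin d ζ φ A W X k - gin d ζ φ A W X' k) v‖ := norm_nonneg _
      have hsum : (1+ζ) * S + (1+ζ) = ∑ l ∈ Finset.Icc 1 (k+1), (1+ζ)^l :=
        sum_pow_succ_id ζ k
      rw [Finset.prod_range_succ, ← hsum]
      calc ‖gin d ζ φ A W X (k+1) v - gin d ζ φ A W X' (k+1) v‖
          ≤ opNormInf (W k) * ((1 + ζ) * ‖(gin d ζ φ A W X k - gin d ζ φ A W X' k) v‖ + (Δ:ℝ) * B) := by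
            refine step1.trans (step2.trans ?_)
            have hwnn : 0 ≤ opNormInf (W k) := le_trans zero_le_one hw
            exact mul_le_mul_of_nonneg_left step3 hwnn
        _ ≤ opNormInf (W k) * ((1 + ζ) * (P * (B * (Δ:ℝ) * S + (1 + ζ) ^ k * ε)) + (Δ:ℝ) * B) := by
            refine mul_le_mul_of_nonneg_left ?_ (le_trans zero_le_one hw)
            exact add_le_add (mul_le_mul_of_nonneg_left hrow (by linarith)) le_rfl
        _ ≤ P * opNormInf (W k) * (B * (Δ:ℝ) * ((1+ζ) * S + (1+ζ)) + (1 + ζ) ^ (k+1) * ε) := by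
            have hS0 : 0 ≤ S := Finset.sum_nonneg fun l _ => pow_nonneg (by linarith) l
            have hεp : 0 ≤ (1+ζ)^k * ε := mul_nonneg (pow_nonneg (by linarith) k) hε
            have hP1 : (1:ℝ) ≤ P * (1+ζ) := by nlinarith [mul_nonneg (by linarith : (0:ℝ) ≤ P) hζ]
            rw [pow_succ]
            nlinarith [mul_nonneg (mul_nonneg (by linarith : (0:ℝ) ≤ opNormInf (W k))
              (mul_nonneg hΔ0 hB0)) (by linarith : (0:ℝ) ≤ P * (1+ζ) - 1)]
  simpa using key L le_rfl u
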